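/- Suppose V is conditionally independent of (Y, U) given S under P. For instantiations u of U, v^l of a subset V_l ⊆ V, and s' of a subset S' of variables, the 'message' factor M'(y, s') = Σ_{s} P(y, u, s) · P(v^l, s' | s) equals P(y, u, v^l, s') whenever V_l and S' are conditionally independent of (Y, U) given S. In particular, the factor update on line 13 of the compilation algorithm correctly maintains the invariant M = P(Y, u, S). -/
import Mathlib


open Finset in
/-- with `(V_l, S') ⊥ (Y, U) | S`, for instantiations `u` of `U`,
`vl` of `V_l ⊆ V` and `s'` of `S'`, the message factor
`M'(y, s') = Σ_s P(y,u,s) · P(vl, s' | s)` equals `P(y, u, vl, s')`;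
this is the invariant `M = P(Y, u, S)` maintained by the factor update of the
compilation algorithm. -/
theorem stmt13 {Y U S Vl S' : Type} [Fintype Y] [Fintype U] [Fintype S]
    [Fintype Vl] [Fintype S']
    (P : Y → U → S → Vl → S' → ℝ)
    (hnonneg : ∀ y u s vl s', 0 ≤ P y u s vl s')
    (hsum : ∑ y, ∑ u, ∑ s, ∑ vl, ∑ s', P y u s vl s' = 1)
    -- conditional independence: P(vl, s' | y, u, s) = P(vl, s' | s) when P(y,u,s) > 0
    (hCI : ∀ y u s vl s', 0 < (∑ vl', ∑ s'', P y u s vl' s'') →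
      P y u s vl s' / (∑ vl', ∑ s'', P y u s vl' s'')
        = (∑ y', ∑ u', P y' u' s vl s') / (∑ y', ∑ u', ∑ vl', ∑ s'', P y' u' s vl' s''))
    (u : U) (vl : Vl) :
    ∀ (y : Y) (s' : S'),
      (∑ s ∈ Finset.univ.filter
          (fun s => 0 < ∑ y', ∑ u', ∑ vl', ∑ s'', P y' u' s vl' s''),
        (∑ vl', ∑ s'', P y u s vl' s'')
          * ((∑ y', ∑ u', P y' u' s vl s')
              / (∑ y', ∑ u', ∑ vl', ∑ s'', P y' u' s vl' s'')))
      = ∑ s, P y u s vl s' := by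
  intro y s'
  rw [show (∑ s, P y u s vl s')
      = ∑ s ∈ Finset.univ.filter
          (fun s => 0 < ∑ y', ∑ u', ∑ vl', ∑ s'', P y' u' s vl' s''),
        P y u s vl s' from ?_]
  · apply Finset.sum_congr rfl
    intro s hs
    simp only [Finset.mem_filter, Finset.mem_univ, true_and] at hs
    by_cases hA : 0 < (∑ vl', ∑ s'', P y u s vl' s'')
    · rw [← hCI y u s vl s' hA, mul_div_cancel₀ _ (ne_of_gt hA)]
    · have hA0 : (∑ vl', ∑ s'', P y u s vl' s'') = 0 := by
        have : 0 ≤ ∑ vl', ∑ s'', P y u s vl' s'' :=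
          Finset.sum_nonneg fun _ _ => Finset.sum_nonneg fun _ _ => hnonneg _ _ _ _ _
        exact le_antisymm (not_lt.mp hA) this
      have hP0 : P y u s vl s' = 0 := by
        have h1 : (∑ s'', P y u s vl s'') = 0 := by
          have := (Finset.sum_eq_zero_iff_of_nonneg
            (fun vl' _ => Finset.sum_nonneg fun s'' _ => hnonneg y u s vl' s'')).mp hA0
          exact this vl (Finset.mem_univ vl)
        exact (Finset.sum_eq_zero_iff_of_nonneg
          (fun s'' _ => hnonneg y u s vl s'')).mp h1 s' (Finset.mem_univ s')
      rw [hA0, hP0, zero_mul]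
  · symm
    apply Finset.sum_subset (Finset.subset_univ _)
    intro s _ hs
    simp only [Finset.mem_filter, Finset.mem_univ, true_and, not_lt] at hs
    have hC0 : (∑ y', ∑ u', ∑ vl', ∑ s'', P y' u' s vl' s'') = 0 := by
      have : 0 ≤ ∑ y', ∑ u', ∑ vl', ∑ s'', P y' u' s vl' s'' :=
        Finset.sum_nonneg fun _ _ => Finset.sum_nonneg fun _ _ =>
          Finset.sum_nonneg fun _ _ => Finset.sum_nonneg fun _ _ => hnonneg _ _ _ _ _
      linarith
    have h1 := (Finset.sum_eq_zero_iff_of_nonneg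
      (fun y' _ => Finset.sum_nonneg fun u' _ => Finset.sum_nonneg fun vl' _ =>
        Finset.sum_nonneg fun s'' _ => hnonneg y' u' s vl' s'')).mp hC0 y (Finset.mem_univ y)
    have h2 := (Finset.sum_eq_zero_iff_of_nonneg
      (fun u' _ => Finset.sum_nonneg fun vl' _ =>
        Finset.sum_nonneg fun s'' _ => hnonneg y u' s vl' s'')).mp h1 u (Finset.mem_univ u)
    have h3 := (Finset.sum_eq_zero_iff_of_nonneg
      (fun vl' _ => Finset.sum_nonneg fun s'' _ => hnonneg y u s vl' s'')).mp h2 vl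
        (Finset.mem_univ vl)
    exact (Finset.sum_eq_zero_iff_of_nonneg
      (fun s'' _ => hnonneg y u s vl s'')).mp h3 s' (Finset.mem_univ s')
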